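/- Let N > 0 and a ≠ 0 be real. The normalization constants of the multiple Hermite polynomials satisfy: h^{(1)}_{k₁,k₂} = (k₁/N)·h^{(1)}_{k₁−1,k₂} for all k₁ ≥ 1, k₂ ≥ 0; h^{(2)}_{k₁,k₂} = (k₂/N)·h^{(2)}_{k₁,k₂−1} for all k₁ ≥ 0, k₂ ≥ 1; h^{(2)}_{k₁+1,k₂} = −2a·h^{(2)}_{k₁,k₂} for all k₁, k₂ ≥ 0; and h^{(1)}_{k₁,k₂+1} = 2a·h^{(1)}_{k₁,k₂} for all k₁, k₂ ≥ 0. -/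

import Mathlib

open MeasureTheory Filter Topology Polynomial Asymptotics

noncomputable section

/-- first weight -/
def w1 (N a x : ℝ) : ℝ := Real.exp (-N * (x ^ 2 / 2 - a * x))

/-- second weight -/
def w2 (N a x : ℝ) : ℝ := Real.exp (-N * (x ^ 2 / 2 + a * x))

/-- `P` is the multiple Hermite polynomial with indices `k₁, k₂`. -/
def IsMHP (N a : ℝ) (k₁ k₂ : ℕ) (P : Polynomial ℝ) : Prop :=
  P.Monic ∧ P.natDegree = k₁ + k₂ ∧
  (∀ j < k₁, ∫ x : ℝ, P.eval x * x ^ j * w1 N a x = 0) ∧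
  (∀ j < k₂, ∫ x : ℝ, P.eval x * x ^ j * w2 N a x = 0)

/-- the normalization constant `h⁽¹⁾` -/
def hc1 (N a : ℝ) (k₁ : ℕ) (P : Polynomial ℝ) : ℝ :=
  ∫ x : ℝ, P.eval x * x ^ k₁ * w1 N a x

/-- the normalization constant `h⁽²⁾` -/
def hc2 (N a : ℝ) (k₂ : ℕ) (P : Polynomial ℝ) : ℝ :=
  ∫ x : ℝ, P.eval x * x ^ k₂ * w2 N a x

namespace MHPaux

def Ig (b : ℝ) (n : ℕ) : ℝ := ∫ x : ℝ, x ^ n * Real.exp (-b * x ^ 2)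

def Phi (b : ℝ) (Q : ℝ[X]) : ℝ[X] :=
  ∑ n ∈ Finset.range (Q.natDegree + 1), C (Ig b n) * hasseDeriv n Q

variable {b : ℝ}

lemma integrable_pow_gauss (hb : 0 < b) (n : ℕ) :
    Integrable (fun x : ℝ => x ^ n * Real.exp (-b * x ^ 2)) := by
  have h : (-1 : ℝ) < (n : ℝ) := lt_of_lt_of_le neg_one_lt_zero (Nat.cast_nonneg n)
  simpa [Real.rpow_natCast] using integrable_rpow_mul_exp_neg_mul_sq hb h

lemma eval_gauss_eq_sum (Q : ℝ[X]) {d : ℕ} (hd : Q.natDegree < d) :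
    (fun x : ℝ => Q.eval x * Real.exp (-b * x ^ 2))
      = fun x : ℝ => ∑ i ∈ Finset.range d, Q.coeff i * (x ^ i * Real.exp (-b * x ^ 2)) := by
  funext x
  rw [Polynomial.eval_eq_sum_range' hd, Finset.sum_mul]
  simp [mul_assoc]

lemma integrable_poly_gauss (hb : 0 < b) (Q : ℝ[X]) :
    Integrable (fun x : ℝ => Q.eval x * Real.exp (-b * x ^ 2)) := by
  rw [eval_gauss_eq_sum Q (Nat.lt_succ_self _)]
  exact integrable_finset_sum _ fun i _ => (integrable_pow_gauss hb i).const_mul _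

lemma integral_poly_gauss (hb : 0 < b) (Q : ℝ[X]) {d : ℕ} (hd : Q.natDegree < d) :
    ∫ x : ℝ, Q.eval x * Real.exp (-b * x ^ 2)
      = ∑ n ∈ Finset.range d, Q.coeff n * Ig b n := by
  rw [eval_gauss_eq_sum Q hd, integral_finset_sum _
    (fun i _ => (integrable_pow_gauss hb i).const_mul _)]
  exact Finset.sum_congr rfl fun n _ => by rw [integral_const_mul]; rfl

lemma pow_gauss_tendsto_atTop (hb : 0 < b) (n : ℕ) :
    Tendsto (fun x : ℝ => x ^ n * Real.exp (-b * x ^ 2)) atTop (𝓝 0) := by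
  have h2 : Tendsto (fun x : ℝ => Real.exp (-(1/2) * x)) atTop (𝓝 0) := by
    apply Real.tendsto_exp_atBot.comp
    show Tendsto (fun x : ℝ => (-(1/2)) * x) atTop atBot
    rw [tendsto_const_mul_atBot_of_neg (by norm_num : (-(1/2):ℝ) < 0)]
    exact tendsto_id
  have h := (rpow_mul_exp_neg_mul_sq_isLittleO_exp_neg hb (n : ℝ)).tendsto_zero_of_tendsto h2
  simpa [Real.rpow_natCast] using h


lemma poly_gauss_tendsto_atTop (hb : 0 < b) (Q : ℝ[X]) :
    Tendsto (fun x : ℝ => Q.eval x * Real.exp (-b * x ^ 2)) atTop (𝓝 0) := by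
  rw [eval_gauss_eq_sum Q (Nat.lt_succ_self _)]
  have := tendsto_finset_sum (Finset.range (Q.natDegree + 1))
    (fun i _ => (pow_gauss_tendsto_atTop hb i).const_mul (Q.coeff i))
  simpa using this

lemma poly_gauss_tendsto_atBot (hb : 0 < b) (Q : ℝ[X]) :
    Tendsto (fun x : ℝ => Q.eval x * Real.exp (-b * x ^ 2)) atBot (𝓝 0) := by
  have h := (poly_gauss_tendsto_atTop hb (Q.comp (-Polynomial.X))).comp tendsto_neg_atBot_atTop
  refine h.congr fun x => ?_
  simp [Function.comp, Polynomial.eval_comp, neg_neg, neg_sq]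

lemma gauss_ibp (hb : 0 < b) (S : ℝ[X]) :
    ∫ x : ℝ, (derivative S - C (2*b) * (Polynomial.X * S)).eval x * Real.exp (-b * x ^ 2) = 0 := by
  set T := derivative S - C (2*b) * (Polynomial.X * S) with hT
  set f : ℝ → ℝ := fun x => S.eval x * Real.exp (-b * x ^ 2) with hf
  set g : ℝ → ℝ := fun x => T.eval x * Real.exp (-b * x ^ 2) with hg
  have hderiv : ∀ x : ℝ, HasDerivAt f (g x) x := by
    intro x
    have h1 : HasDerivAt (fun x : ℝ => S.eval x) (S.derivative.eval x) x := S.hasDerivAt x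
    have h2 : HasDerivAt (fun x : ℝ => Real.exp (-b * x ^ 2))
        (Real.exp (-b * x ^ 2) * (-b * (2 * x))) x := by
      have h3 : HasDerivAt (fun x : ℝ => -b * x ^ 2) (-b * (2 * x)) x := by
        simpa using (hasDerivAt_pow 2 x).const_mul (-b)
      exact h3.exp
    have h4 : HasDerivAt (fun x : ℝ => S.eval x * Real.exp (-b * x ^ 2)) _ x := h1.mul h2
    convert h4 using 1
    show T.eval x * Real.exp (-b * x ^ 2) = _
    simp only [hT, Polynomial.eval_sub, Polynomial.eval_mul, Polynomial.eval_C,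
      Polynomial.eval_X]
    ring
  have hint : Integrable g := integrable_poly_gauss hb T
  have htop : Tendsto f atTop (𝓝 0) := poly_gauss_tendsto_atTop hb S
  have hbot : Tendsto f atBot (𝓝 0) := poly_gauss_tendsto_atBot hb S
  have hIic : ∫ x in Set.Iic (0:ℝ), g x = f 0 - 0 :=
    integral_Iic_of_hasDerivAt_of_tendsto' (fun x _ => hderiv x) hint.integrableOn hbot
  have hIoi : ∫ x in Set.Ioi (0:ℝ), g x = 0 - f 0 :=
    integral_Ioi_of_hasDerivAt_of_tendsto' (fun x _ => hderiv x) hint.integrableOn htop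
  have hsplit := intervalIntegral.integral_Iic_add_Ioi (b := (0:ℝ)) (μ := volume)
    hint.integrableOn hint.integrableOn
  show ∫ x : ℝ, g x = 0
  rw [← hsplit, hIic, hIoi]
  ring

lemma gauss_mul_X (hb : 0 < b) (S : ℝ[X]) :
    ∫ x : ℝ, (Polynomial.X * S).eval x * Real.exp (-b * x ^ 2)
      = (1/(2*b)) * ∫ x : ℝ, (derivative S).eval x * Real.exp (-b * x ^ 2) := by
  have h := gauss_ibp hb S
  have h1 : ∀ x : ℝ, (derivative S - C (2*b) * (Polynomial.X * S)).eval x * Real.exp (-b * x ^ 2)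
      = (derivative S).eval x * Real.exp (-b * x ^ 2)
        - (2*b) * ((Polynomial.X * S).eval x * Real.exp (-b * x ^ 2)) := by
    intro x
    simp only [Polynomial.eval_sub, Polynomial.eval_mul, Polynomial.eval_C, Polynomial.eval_X]
    ring
  simp_rw [h1] at h
  rw [integral_sub (integrable_poly_gauss hb _)
      ((integrable_poly_gauss hb (Polynomial.X * S)).const_mul _), integral_const_mul] at h
  have hb' : (2*b) ≠ 0 := by positivity
  field_simp at h ⊢
  linarith


lemma Phi_spec (Q : ℝ[X]) {d : ℕ} (hd : Q.natDegree < d) :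
    Phi b Q = ∑ n ∈ Finset.range d, C (Ig b n) * hasseDeriv n Q := by
  refine Finset.sum_subset (Finset.range_subset_range.2 hd) fun n _ hn => ?_
  rw [Polynomial.hasseDeriv_eq_zero_of_lt_natDegree _ _ (by
    simpa using Nat.lt_of_succ_le (not_lt.mp (by simpa using hn))), mul_zero]

lemma Phi_eval (hb : 0 < b) (Q : ℝ[X]) (y : ℝ) :
    (Phi b Q).eval y = ∫ x : ℝ, Q.eval (x + y) * Real.exp (-b * x ^ 2) := by
  have h1 : ∀ x : ℝ, Q.eval (x + y) = (Polynomial.taylor y Q).eval x := fun x =>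
    (Polynomial.taylor_eval y Q x).symm
  simp_rw [h1]
  rw [integral_poly_gauss hb _ (d := Q.natDegree + 1)
      (by rw [Polynomial.natDegree_taylor]; omega)]
  simp only [Phi, Polynomial.eval_finset_sum, Polynomial.eval_mul, Polynomial.eval_C,
    Polynomial.taylor_coeff]
  exact Finset.sum_congr rfl fun n _ => mul_comm _ _

lemma Phi_natDegree_le (Q : ℝ[X]) : (Phi b Q).natDegree ≤ Q.natDegree :=
  Polynomial.natDegree_sum_le_of_forall_le _ _ fun n _ =>
    (Polynomial.natDegree_C_mul_le _ _).trans
      ((Polynomial.natDegree_hasseDeriv_le Q n).trans (Nat.sub_le _ _))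

lemma Phi_coeff_top (Q : ℝ[X]) :
    (Phi b Q).coeff Q.natDegree = Ig b 0 * Q.leadingCoeff := by
  rw [Phi, Polynomial.finset_sum_coeff, Finset.sum_eq_single 0]
  · rw [Polynomial.hasseDeriv_zero', Polynomial.coeff_C_mul]
    rfl
  · intro n _ h0
    rw [Polynomial.coeff_C_mul, Polynomial.hasseDeriv_coeff,
        Polynomial.coeff_eq_zero_of_natDegree_lt (by omega), mul_zero, mul_zero]
  · simp

lemma hasseDeriv_derivative' (f : ℝ[X]) (n : ℕ) :
    derivative (hasseDeriv n f) = hasseDeriv n (derivative f) := by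
  have h1 := LinearMap.congr_fun (Polynomial.hasseDeriv_comp (R := ℝ) 1 n) f
  have h2 := LinearMap.congr_fun (Polynomial.hasseDeriv_comp (R := ℝ) n 1) f
  simp only [LinearMap.coe_comp, Function.comp_apply, Polynomial.hasseDeriv_one,
    LinearMap.smul_apply, Nat.choose_one_right, Nat.choose_succ_self_right] at h1 h2
  rw [h1, h2]
  rw [add_comm]

lemma Phi_derivative (Q : ℝ[X]) :
    derivative (Phi b Q) = Phi b (derivative Q) := by
  rw [Phi, Phi_spec (b := b) (derivative Q) (d := Q.natDegree + 1)
      (Nat.lt_succ_of_le ((Polynomial.natDegree_derivative_le Q).trans (Nat.sub_le _ _))),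
    map_sum]
  exact Finset.sum_congr rfl fun n _ => by
    rw [Polynomial.derivative_C_mul, hasseDeriv_derivative']

lemma Phi_X_mul (hb : 0 < b) (Q : ℝ[X]) :
    Phi b (Polynomial.X * Q)
      = C (1/(2*b)) * derivative (Phi b Q) + Polynomial.X * Phi b Q := by
  apply Polynomial.funext
  intro y
  rw [Phi_eval hb]
  have h1 : ∀ x : ℝ, (Polynomial.X * Q).eval (x + y) * Real.exp (-b * x ^ 2)
      = (Polynomial.X * Polynomial.taylor y Q).eval x * Real.exp (-b * x ^ 2)
        + y * ((Polynomial.taylor y Q).eval x * Real.exp (-b * x ^ 2)) := by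
    intro x
    simp only [Polynomial.eval_mul, Polynomial.eval_X, Polynomial.taylor_eval]
    ring
  simp_rw [h1]
  rw [integral_add (integrable_poly_gauss hb _)
      ((integrable_poly_gauss hb (Polynomial.taylor y Q)).const_mul y),
    integral_const_mul, gauss_mul_X hb]
  have h2 : derivative (Polynomial.taylor y Q) = Polynomial.taylor y (derivative Q) := by
    simp [Polynomial.taylor_apply, Polynomial.derivative_comp]
  have h3 : ∀ x : ℝ, (Polynomial.taylor y (derivative Q)).eval x
      = (derivative Q).eval (x + y) := fun x => Polynomial.taylor_eval y (derivative Q) x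
  rw [h2]
  simp_rw [h3]
  rw [← Phi_eval hb (derivative Q) y, ← Phi_derivative]
  have h4 : ∀ x : ℝ, (Polynomial.taylor y Q).eval x = Q.eval (x + y) := fun x =>
    Polynomial.taylor_eval y Q x
  simp_rw [h4]
  rw [← Phi_eval hb Q y]
  simp only [Polynomial.eval_add, Polynomial.eval_mul, Polynomial.eval_C, Polynomial.eval_X]


def Sf (F : ℝ[X]) (j : ℕ) : Submodule ℝ[X] ℝ[X] :=
  Submodule.span ℝ[X] ((fun i => derivative^[i] F) '' Set.Iio j)

lemma Sf_mono {F : ℝ[X]} {j : ℕ} : Sf F j ≤ Sf F (j+1) :=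
  Submodule.span_mono (Set.image_mono (Set.Iio_subset_Iio (Nat.le_succ j)))

lemma Sf_deriv_mem {F : ℝ[X]} {j : ℕ} {r : ℝ[X]} (hr : r ∈ Sf F j) :
    derivative r ∈ Sf F (j+1) := by
  have key : r ∈ Sf F (j+1) ∧ derivative r ∈ Sf F (j+1) := by
    refine Submodule.span_induction
      (p := fun q _ => q ∈ Sf F (j+1) ∧ derivative q ∈ Sf F (j+1)) ?_ ?_ ?_ ?_ hr
    · rintro q ⟨i, hi, rfl⟩
      have hi' : i < j := hi
      refine ⟨Submodule.subset_span ⟨i, Set.mem_Iio.mpr (by omega), rfl⟩, ?_⟩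
      rw [← Function.iterate_succ_apply' derivative i F]
      exact Submodule.subset_span ⟨i+1, Set.mem_Iio.mpr (by omega), rfl⟩
    · exact ⟨zero_mem _, by rw [map_zero]; exact zero_mem _⟩
    · rintro q r _ _ ⟨h1, h2⟩ ⟨h3, h4⟩
      exact ⟨add_mem h1 h3, by rw [map_add]; exact add_mem h2 h4⟩
    · rintro p q _ ⟨h1, h2⟩
      refine ⟨Submodule.smul_mem _ p h1, ?_⟩
      rw [smul_eq_mul, Polynomial.derivative_mul]
      have ha := (Sf F (j+1)).smul_mem (derivative p) h1
      have hb' := (Sf F (j+1)).smul_mem p h2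
      rw [smul_eq_mul] at ha hb'
      exact add_mem ha hb'
  exact key.2

lemma Sf_eval_zero {F : ℝ[X]} {k : ℕ} {c : ℝ}
    (h0 : ∀ i < k, (derivative^[i] F).eval c = 0)
    {r : ℝ[X]} (hr : r ∈ Sf F k) : r.eval c = 0 := by
  refine Submodule.span_induction (p := fun q _ => q.eval c = 0) ?_ ?_ ?_ ?_ hr
  · rintro q ⟨i, hi, rfl⟩
    exact h0 i hi
  · simp
  · intro q r _ _ h1 h2
    simp [h1, h2]
  · intro p q _ h1
    rw [smul_eq_mul, Polynomial.eval_mul, h1, mul_zero]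

lemma key_span (hb : 0 < b) (Q : ℝ[X]) (j : ℕ) :
    Phi b (Polynomial.X ^ j * Q) - C ((1/(2*b))^j) * derivative^[j] (Phi b Q)
      ∈ Sf (Phi b Q) j := by
  induction j with
  | zero =>
    simp only [pow_zero, one_mul, Function.iterate_zero, id_eq, map_one]
    rw [sub_self]
    exact zero_mem _
  | succ j ih =>
    have hX : Polynomial.X ^ (j+1) * Q = Polynomial.X * (Polynomial.X ^ j * Q) := by ring
    rw [hX, Phi_X_mul hb]
    set F := Phi b Q with hF
    set G := Phi b (Polynomial.X ^ j * Q) with hGdef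
    set r := G - C ((1/(2*b))^j) * derivative^[j] F with hr
    have hG : G = C ((1/(2*b))^j) * derivative^[j] F + r := by rw [hr]; ring
    have hdG : derivative G = C ((1/(2*b))^j) * derivative^[j+1] F + derivative r := by
      rw [hG, map_add, Polynomial.derivative_C_mul, Function.iterate_succ_apply']
    have hCC : C ((1/(2*b))^(j+1)) = C (1/(2*b)) * C ((1/(2*b))^j) := by
      rw [← Polynomial.C_mul, ← pow_succ']
    have key : C (1/(2*b)) * derivative G + Polynomial.X * G
        - C ((1/(2*b))^(j+1)) * derivative^[j+1] F
        = C (1/(2*b)) * derivative r + Polynomial.X * r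
          + (Polynomial.X * C ((1/(2*b))^j)) * derivative^[j] F := by
      rw [hdG, hCC]
      rw [hG]
      ring
    rw [key]
    refine add_mem (add_mem ?_ ?_) ?_
    · have h5 := (Sf F (j+1)).smul_mem (C (1/(2*b))) (Sf_deriv_mem ih)
      rwa [smul_eq_mul] at h5
    · have h5 := (Sf F (j+1)).smul_mem Polynomial.X (Sf_mono ih)
      rwa [smul_eq_mul] at h5
    · have h5 := (Sf F (j+1)).smul_mem (Polynomial.X * C ((1/(2*b))^j))
        (Submodule.subset_span ⟨j, Set.mem_Iio.mpr (by omega), rfl⟩)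
      rwa [smul_eq_mul] at h5


lemma iterate_deriv_eval (F : ℝ[X]) (i : ℕ) (c : ℝ) :
    (derivative^[i] F).eval c = (i.factorial : ℝ) * (hasseDeriv i F).eval c := by
  have h := congrFun (Polynomial.factorial_smul_hasseDeriv (R := ℝ) i) F
  rw [← h]
  simp [nsmul_eq_mul]

lemma taylor_pow_aux (c : ℝ) (m : ℕ) (G : ℝ[X]) :
    Polynomial.taylor c ((Polynomial.X - C c) ^ m * G)
      = Polynomial.X ^ m * Polynomial.taylor c G := by
  rw [Polynomial.taylor_mul]
  congr 1
  rw [Polynomial.taylor_apply, Polynomial.pow_comp]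
  congr 1
  rw [Polynomial.sub_comp, Polynomial.X_comp, Polynomial.C_comp]
  ring

lemma sub_pow_dvd_iff (m : ℕ) (c : ℝ) (F : ℝ[X]) :
    (Polynomial.X - C c) ^ m ∣ F ↔ ∀ i < m, (hasseDeriv i F).eval c = 0 := by
  constructor
  · rintro ⟨G, rfl⟩ i hi
    rw [← Polynomial.taylor_coeff, taylor_pow_aux]
    exact Polynomial.X_pow_dvd_iff.mp (dvd_mul_right _ _) i hi
  · intro h
    have hdvd : Polynomial.X ^ m ∣ Polynomial.taylor c F :=
      Polynomial.X_pow_dvd_iff.mpr fun d hd => by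
        rw [Polynomial.taylor_coeff]; exact h d hd
    obtain ⟨H, hH⟩ := hdvd
    refine ⟨Polynomial.taylor (-c) H, ?_⟩
    have h2 := congrArg (Polynomial.taylor (-c)) hH
    rw [Polynomial.taylor_taylor, neg_add_cancel] at h2
    have h3 : Polynomial.taylor (0 : ℝ) F = F := by
      simp [Polynomial.taylor_apply]
    rw [h3] at h2
    rw [h2, Polynomial.taylor_mul]
    congr 1
    rw [Polynomial.taylor_apply, Polynomial.pow_comp, Polynomial.X_comp]
    congr 1
    rw [map_neg]
    ring

lemma dvd_of_ortho (hb : 0 < b) (Q : ℝ[X]) (c : ℝ) (k : ℕ)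
    (h : ∀ j < k, (Phi b (Polynomial.X ^ j * Q)).eval c = 0) :
    (Polynomial.X - C c) ^ k ∣ Phi b Q := by
  set F := Phi b Q with hF
  have main : ∀ m, m ≤ k → (Polynomial.X - C c) ^ m ∣ F := by
    intro m
    induction m with
    | zero => simp
    | succ m ih =>
      intro hm
      have hdvd := ih (by omega)
      have hhd : ∀ i < m, (hasseDeriv i F).eval c = 0 := (sub_pow_dvd_iff m c F).mp hdvd
      have hit : ∀ i < m, (derivative^[i] F).eval c = 0 := by
        intro i hi
        rw [iterate_deriv_eval, hhd i hi, mul_zero]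
      have heval := Sf_eval_zero hit (key_span hb Q m)
      have hm0 : (Phi b (Polynomial.X ^ m * Q)).eval c = 0 := h m (by omega)
      have hdm : (derivative^[m] F).eval c = 0 := by
        simp only [Polynomial.eval_sub, Polynomial.eval_mul, Polynomial.eval_C, hm0,
          zero_sub, neg_eq_zero] at heval
        have hβ : ((1:ℝ)/(2*b))^m ≠ 0 := by positivity
        exact (mul_eq_zero.mp heval).resolve_left hβ
      have hhdm : (hasseDeriv m F).eval c = 0 := by
        have h6 := iterate_deriv_eval F m c
        rw [hdm] at h6
        have hfac : (m.factorial : ℝ) ≠ 0 := Nat.cast_ne_zero.mpr m.factorial_ne_zero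
        exact (mul_eq_zero.mp h6.symm).resolve_left hfac
      refine (sub_pow_dvd_iff (m+1) c F).mpr fun i hi => ?_
      rcases Nat.lt_succ_iff_lt_or_eq.mp hi with h' | rfl
      exacts [hhd i h', hhdm]
  exact main k le_rfl


lemma integral_w1_eq (N c : ℝ) (hN : 0 < N) (R : ℝ[X]) :
    ∫ x : ℝ, R.eval x * w1 N c x
      = Real.exp (N * c ^ 2 / 2) * (Phi (N/2) R).eval c := by
  have hb : (0:ℝ) < N/2 := by linarith
  have h1 : ∀ x : ℝ, R.eval x * w1 N c x
      = Real.exp (N * c ^ 2 / 2)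
        * (R.eval ((x + -c) + c) * Real.exp (-(N/2) * (x + -c) ^ 2)) := by
    intro x
    have hx : ((x + -c) + c) = x := by ring
    rw [hx, w1, mul_left_comm, ← Real.exp_add]
    congr 2
    ring
  simp_rw [h1]
  rw [integral_const_mul]
  congr 1
  rw [Phi_eval hb R c]
  exact integral_add_right_eq_self
    (fun u => R.eval (u + c) * Real.exp (-(N/2) * u ^ 2)) (-c)

lemma Phi_structure (N c : ℝ) (hN : 0 < N) (hc : c ≠ 0) (k1 k2 : ℕ) (Q : ℝ[X])
    (hQ : IsMHP N c k1 k2 Q) :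
    Phi (N/2) Q = C (Ig (N/2) 0)
      * ((Polynomial.X - C c) ^ k1 * (Polynomial.X + C c) ^ k2) := by
  have hb : (0:ℝ) < N/2 := by linarith
  obtain ⟨hmon, hdeg, ho1, ho2⟩ := hQ
  have horth : ∀ (e : ℝ) (k : ℕ), (∀ j < k, ∫ x : ℝ, Q.eval x * x ^ j * w1 N e x = 0) →
      ∀ j < k, (Phi (N/2) (Polynomial.X ^ j * Q)).eval e = 0 := by
    intro e k hk j hj
    have h0 := hk j hj
    have h2 : (fun x : ℝ => (Polynomial.X ^ j * Q).eval x * w1 N e x)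
        = fun x : ℝ => Q.eval x * x ^ j * w1 N e x := by
      funext x
      simp only [Polynomial.eval_mul, Polynomial.eval_pow, Polynomial.eval_X]
      ring
    have h3 : ∫ x : ℝ, (Polynomial.X ^ j * Q).eval x * w1 N e x = 0 := by rw [h2]; exact h0
    rw [integral_w1_eq N e hN] at h3
    exact (mul_eq_zero.mp h3).resolve_left (Real.exp_ne_zero _)
  have ho2' : ∀ j < k2, ∫ x : ℝ, Q.eval x * x ^ j * w1 N (-c) x = 0 := by
    intro j hj
    have h0 := ho2 j hj
    have h2 : (fun x : ℝ => Q.eval x * x ^ j * w1 N (-c) x)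
        = fun x : ℝ => Q.eval x * x ^ j * w2 N c x := by
      funext x
      rw [w1, w2]
      congr 2
      ring
    rw [h2]
    exact h0
  have hdvd1 : (Polynomial.X - C c) ^ k1 ∣ Phi (N/2) Q :=
    dvd_of_ortho hb Q c k1 (horth c k1 ho1)
  have hdvd2 : (Polynomial.X + C c) ^ k2 ∣ Phi (N/2) Q := by
    have := dvd_of_ortho hb Q (-c) k2 (horth (-c) k2 ho2')
    rwa [map_neg, sub_neg_eq_add] at this
  have hcop : IsCoprime ((Polynomial.X - C c) ^ k1) ((Polynomial.X + C c) ^ k2) := by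
    have h5 : IsCoprime (Polynomial.X - C c) (Polynomial.X - C (-c)) :=
      Polynomial.isCoprime_X_sub_C_of_isUnit_sub (isUnit_iff_ne_zero.mpr (by
        intro h
        apply hc
        linarith))
    rw [map_neg, sub_neg_eq_add] at h5
    exact h5.pow
  have hdvd := hcop.mul_dvd hdvd1 hdvd2
  set D := (Polynomial.X - C c) ^ k1 * (Polynomial.X + C c) ^ k2 with hD
  have hmonD : D.Monic := ((Polynomial.monic_X_sub_C c).pow k1).mul
    ((Polynomial.monic_X_add_C c).pow k2)
  have hdegD : D.natDegree = k1 + k2 := by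
    rw [hD, ((Polynomial.monic_X_sub_C c).pow k1).natDegree_mul
        ((Polynomial.monic_X_add_C c).pow k2),
      Polynomial.natDegree_pow, Polynomial.natDegree_pow, Polynomial.natDegree_X_sub_C,
      Polynomial.natDegree_X_add_C, mul_one, mul_one]
  have hdegF : (Phi (N/2) Q).natDegree ≤ k1 + k2 := by
    rw [← hdeg]; exact Phi_natDegree_le Q
  have hco : (Phi (N/2) Q).coeff (k1 + k2) = Ig (N/2) 0 := by
    have h7 := Phi_coeff_top (b := N/2) Q
    rw [hdeg, hmon.leadingCoeff, mul_one] at h7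
    exact h7
  obtain ⟨E, hE⟩ := hdvd
  rcases eq_or_ne E 0 with rfl | hE0
  · rw [mul_zero] at hE
    have h8 : Ig (N/2) 0 = 0 := by rw [← hco, hE, Polynomial.coeff_zero]
    rw [hE, h8, map_zero, zero_mul]
  · have h10 : (Phi (N/2) Q).natDegree = D.natDegree + E.natDegree := by
      rw [hE]
      exact Polynomial.natDegree_mul hmonD.ne_zero hE0
    have h9 : E.natDegree = 0 := by omega
    obtain ⟨e, hEe⟩ : ∃ e, E = C e := ⟨E.coeff 0, Polynomial.eq_C_of_natDegree_le_zero h9.le⟩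
    have h11 : e = Ig (N/2) 0 := by
      have hDc : D.coeff (k1 + k2) = 1 := by rw [← hdegD]; exact hmonD.coeff_natDegree
      rw [← hco, hE, hEe, Polynomial.coeff_mul_C, hDc, one_mul]
    rw [hE, hEe, h11, mul_comm]


lemma hc1_eq (N c : ℝ) (hN : 0 < N) (hc : c ≠ 0) (k1 k2 : ℕ) (Q : ℝ[X])
    (hQ : IsMHP N c k1 k2 Q) :
    hc1 N c k1 Q = Real.exp (N * c ^ 2 / 2) * Ig (N/2) 0
      * (1/N) ^ k1 * (k1.factorial : ℝ) * (2*c) ^ k2 := by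
  have hb : (0:ℝ) < N/2 := by linarith
  have hF := Phi_structure N c hN hc k1 k2 Q hQ
  set F := Phi (N/2) Q with hFdef
  have h1 : hc1 N c k1 Q = ∫ x : ℝ, (Polynomial.X ^ k1 * Q).eval x * w1 N c x := by
    rw [hc1]
    congr 1
    funext x
    simp only [Polynomial.eval_mul, Polynomial.eval_pow, Polynomial.eval_X]
    ring
  rw [h1, integral_w1_eq N c hN]
  have hdvdF : (Polynomial.X - C c) ^ k1 ∣ F :=
    ⟨C (Ig (N/2) 0) * (Polynomial.X + C c) ^ k2, by rw [hF]; ring⟩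
  have hvanish : ∀ i < k1, (derivative^[i] F).eval c = 0 := by
    intro i hi
    rw [iterate_deriv_eval, (sub_pow_dvd_iff k1 c F).mp hdvdF i hi, mul_zero]
  have heval := Sf_eval_zero hvanish (key_span hb Q k1)
  have hPhiX : (Phi (N/2) (Polynomial.X ^ k1 * Q)).eval c
      = (1/(2*(N/2)))^k1 * (derivative^[k1] F).eval c := by
    simp only [Polynomial.eval_sub, Polynomial.eval_mul, Polynomial.eval_C] at heval
    linarith
  have htay : Polynomial.taylor c F
      = Polynomial.X ^ k1 * (C (Ig (N/2) 0) * (Polynomial.X + C (2*c)) ^ k2) := by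
    rw [hF, Polynomial.taylor_apply]
    simp only [Polynomial.mul_comp, Polynomial.pow_comp, Polynomial.sub_comp,
      Polynomial.add_comp, Polynomial.X_comp, Polynomial.C_comp]
    have e1 : Polynomial.X + C c - C c = (Polynomial.X : ℝ[X]) := by ring
    have e2 : Polynomial.X + C c + C c = Polynomial.X + C (2*c) := by
      rw [show (2*c) = c + c by ring, Polynomial.C_add]
      ring
    rw [e1, e2]
    ring
  have hd : (derivative^[k1] F).eval c
      = (k1.factorial : ℝ) * (Ig (N/2) 0 * (2*c) ^ k2) := by
    rw [iterate_deriv_eval, ← Polynomial.taylor_coeff, htay]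
    congr 1
    rw [mul_comm, Polynomial.coeff_mul_X_pow']
    simp [Polynomial.coeff_zero_eq_eval_zero]
  rw [hPhiX, hd]
  have h2N : (2*(N/2)) = N := by ring
  rw [h2N]
  ring

lemma w2_eq_w1_neg (N c x : ℝ) : w2 N c x = w1 N (-c) x := by
  rw [w1, w2]
  congr 1
  ring

lemma isMHP_swap {N c : ℝ} {k1 k2 : ℕ} {Q : ℝ[X]} (hQ : IsMHP N c k1 k2 Q) :
    IsMHP N (-c) k2 k1 Q := by
  obtain ⟨hm, hd, h1, h2⟩ := hQ
  refine ⟨hm, by omega, ?_, ?_⟩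
  · intro j hj
    have := h2 j hj
    have hw : (fun x : ℝ => Q.eval x * x ^ j * w1 N (-c) x)
        = fun x : ℝ => Q.eval x * x ^ j * w2 N c x := by
      funext x
      rw [w2_eq_w1_neg]
    rw [hw]
    exact this
  · intro j hj
    have := h1 j hj
    have hw : (fun x : ℝ => Q.eval x * x ^ j * w2 N (-c) x)
        = fun x : ℝ => Q.eval x * x ^ j * w1 N c x := by
      funext x
      rw [w2_eq_w1_neg, neg_neg]
    rw [hw]
    exact this

lemma hc2_eq (N c : ℝ) (hN : 0 < N) (hc : c ≠ 0) (k1 k2 : ℕ) (Q : ℝ[X])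
    (hQ : IsMHP N c k1 k2 Q) :
    hc2 N c k2 Q = Real.exp (N * c ^ 2 / 2) * Ig (N/2) 0
      * (1/N) ^ k2 * (k2.factorial : ℝ) * (-(2*c)) ^ k1 := by
  have h1 : hc2 N c k2 Q = hc1 N (-c) k2 Q := by
    rw [hc1, hc2]
    congr 1
    funext x
    rw [w2_eq_w1_neg]
  rw [h1, hc1_eq N (-c) hN (neg_ne_zero.mpr hc) k2 k1 Q (isMHP_swap hQ)]
  rw [neg_sq]
  congr 2
  ring

end MHPaux

open MHPaux

/-- Recurrences for the normalization constants of the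
multiple Hermite polynomials. -/
theorem statement17 (N a : ℝ) (hN : 0 < N) (ha : a ≠ 0)
    (P : ℕ → ℕ → Polynomial ℝ) (hP : ∀ k₁ k₂ : ℕ, IsMHP N a k₁ k₂ (P k₁ k₂)) :
    (∀ k₁ k₂ : ℕ, 1 ≤ k₁ →
      hc1 N a k₁ (P k₁ k₂) = (k₁ : ℝ) / N * hc1 N a (k₁ - 1) (P (k₁ - 1) k₂)) ∧
    (∀ k₁ k₂ : ℕ, 1 ≤ k₂ →
      hc2 N a k₂ (P k₁ k₂) = (k₂ : ℝ) / N * hc2 N a (k₂ - 1) (P k₁ (k₂ - 1))) ∧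
    (∀ k₁ k₂ : ℕ, hc2 N a k₂ (P (k₁ + 1) k₂) = -2 * a * hc2 N a k₂ (P k₁ k₂)) ∧
    (∀ k₁ k₂ : ℕ, hc1 N a k₁ (P k₁ (k₂ + 1)) = 2 * a * hc1 N a k₁ (P k₁ k₂)) := by
  refine ⟨?_, ?_, ?_, ?_⟩
  · intro k₁ k₂ hk
    obtain ⟨m, rfl⟩ : ∃ m, k₁ = m + 1 := ⟨k₁ - 1, by omega⟩
    rw [hc1_eq N a hN ha (m+1) k₂ _ (hP _ _)]
    have h1 : m + 1 - 1 = m := by omega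
    rw [h1, hc1_eq N a hN ha m k₂ _ (hP _ _), pow_succ, Nat.factorial_succ]
    push_cast
    ring
  · intro k₁ k₂ hk
    obtain ⟨m, rfl⟩ : ∃ m, k₂ = m + 1 := ⟨k₂ - 1, by omega⟩
    rw [hc2_eq N a hN ha k₁ (m+1) _ (hP _ _)]
    have h1 : m + 1 - 1 = m := by omega
    rw [h1, hc2_eq N a hN ha k₁ m _ (hP _ _), pow_succ, Nat.factorial_succ]
    push_cast
    ring
  · intro k₁ k₂
    rw [hc2_eq N a hN ha (k₁+1) k₂ _ (hP _ _), hc2_eq N a hN ha k₁ k₂ _ (hP _ _), pow_succ]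
    ring
  · intro k₁ k₂
    rw [hc1_eq N a hN ha k₁ (k₂+1) _ (hP _ _), hc1_eq N a hN ha k₁ k₂ _ (hP _ _), pow_succ]
    ring


end
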